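/- Let G and H be finite simple graphs, let S be a minimum dominating set (γ-set) of G, and let h ∈ V(H) be a vertex adjacent to every other vertex of H. Then the domination cover number of the dominating set D = S × {h} of the lexicographic product G∘H satisfies C_D(G∘H) = C_S(G) · |V(H)| + γ(G) · (|V(H)| − 1). -/

import Mathlib

open Finset

variable {α β : Type*}

/-- `D` is a dominating set of `G`: every vertex outside `D` has a neighbor in `D`. -/
def IsDomSet (G : SimpleGraph α) (D : Finset α) : Prop :=
  ∀ v ∉ D, ∃ u ∈ D, G.Adj u v

/-- The domination number `γ(G)`: minimum cardinality of a dominating set. -/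
noncomputable def domNum (G : SimpleGraph α) : ℕ :=
  sInf {n | ∃ D : Finset α, IsDomSet G D ∧ D.card = n}

/-- The degree of vertex `v` in `G`. -/
noncomputable def vdeg (G : SimpleGraph α) (v : α) : ℕ :=
  Nat.card (G.neighborSet v)

/-- The (domination) cover number of a set of vertices `A`: the sum of degrees. -/
noncomputable def coverNum (G : SimpleGraph α) (A : Finset α) : ℕ :=
  ∑ v ∈ A, vdeg G v

/-- `D` is a minimum dominating set (γ-set) of `G`. -/
def IsGammaSet (G : SimpleGraph α) (D : Finset α) : Prop :=
  IsDomSet G D ∧ D.card = domNum G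

/-- The lexicographic product `G ∘ H` of two simple graphs. -/
def lexProd (G : SimpleGraph α) (H : SimpleGraph β) : SimpleGraph (α × β) where
  Adj a b := G.Adj a.1 b.1 ∨ (a.1 = b.1 ∧ H.Adj a.2 b.2)
  symm := by
    constructor
    rintro a b (h | ⟨h1, h2⟩)
    · exact Or.inl h.symm
    · exact Or.inr ⟨h1.symm, h2.symm⟩
  loopless := by
    constructor
    rintro a (h | ⟨_, h⟩)
    · exact G.loopless.irrefl _ h
    · exact H.loopless.irrefl _ h

/-- If `S` is a minimum dominating set of `G` and `h ∈ V(H)` is adjacent to all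
other vertices of `H`, then the dominating set `D = S × {h}` of `G ∘ H` has
cover number `C_D(G ∘ H) = C_S(G) · |V(H)| + γ(G) · (|V(H)| − 1)`. -/
theorem lexProd_coverNum_of_universal_vertex [Fintype α] [Fintype β]
    (G : SimpleGraph α) (H : SimpleGraph β)
    (S : Finset α) (hS : IsGammaSet G S)
    (h : β) (hh : ∀ x : β, x ≠ h → H.Adj h x) :
    coverNum (lexProd G H) (S ×ˢ {h}) =
      coverNum G S * Fintype.card β + domNum G * (Fintype.card β - 1) := by
  classical
  have hdegH : vdeg H h = Fintype.card β - 1 := by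
    have : H.neighborFinset h = Finset.univ.erase h := by
      ext x
      simp only [SimpleGraph.mem_neighborFinset, Finset.mem_erase, Finset.mem_univ, and_true]
      constructor
      · intro hx; exact (H.ne_of_adj hx).symm
      · intro hx; exact hh x hx
    unfold vdeg
    rw [Nat.card_eq_fintype_card]
    rw [show Fintype.card (H.neighborSet h) = (H.neighborFinset h).card from
      (SimpleGraph.card_neighborSet_eq_degree H h).trans
        (SimpleGraph.card_neighborFinset_eq_degree H h).symm]
    rw [this, Finset.card_erase_of_mem (Finset.mem_univ h), Finset.card_univ]
  have hdeg : ∀ v : α, vdeg (lexProd G H) (v, h) = vdeg G v * Fintype.card β + vdeg H h := by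
    intro v
    unfold vdeg
    simp only [Nat.card_eq_fintype_card]
    have hset : ((lexProd G H).neighborFinset (v, h) : Finset (α × β)) =
        (G.neighborFinset v ×ˢ Finset.univ) ∪ ({v} ×ˢ H.neighborFinset h) := by
      ext ⟨a, b⟩
      simp only [SimpleGraph.mem_neighborFinset, Finset.mem_union, Finset.mem_product,
        Finset.mem_univ, Finset.mem_singleton, and_true]
      constructor
      · rintro (hg | ⟨he, hb⟩)
        · exact Or.inl hg
        · exact Or.inr ⟨he.symm, hb⟩
      · rintro (hg | ⟨he, hb⟩)
        · exact Or.inl hg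
        · exact Or.inr ⟨he.symm, hb⟩
    have hdisj : Disjoint (G.neighborFinset v ×ˢ (Finset.univ : Finset β))
        ({v} ×ˢ H.neighborFinset h) := by
      rw [Finset.disjoint_left]
      rintro ⟨a, b⟩ ha hb
      simp only [Finset.mem_product, Finset.mem_singleton, SimpleGraph.mem_neighborFinset]
        at ha hb
      exact G.ne_of_adj ha.1 hb.1.symm
    have h1 : Fintype.card ((lexProd G H).neighborSet (v, h)) =
        ((lexProd G H).neighborFinset (v, h)).card :=
      (SimpleGraph.card_neighborSet_eq_degree _ _).trans
        (SimpleGraph.card_neighborFinset_eq_degree _ _).symm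
    have h2 : Fintype.card (G.neighborSet v) = (G.neighborFinset v).card :=
      (SimpleGraph.card_neighborSet_eq_degree _ _).trans
        (SimpleGraph.card_neighborFinset_eq_degree _ _).symm
    have h3 : Fintype.card (H.neighborSet h) = (H.neighborFinset h).card :=
      (SimpleGraph.card_neighborSet_eq_degree _ _).trans
        (SimpleGraph.card_neighborFinset_eq_degree _ _).symm
    rw [h1, h2, h3, hset, Finset.card_union_of_disjoint hdisj, Finset.card_product,
      Finset.card_product, Finset.card_univ, Finset.card_singleton, one_mul]
  have hcard : S.card = domNum G := hS.2
  unfold coverNum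
  rw [Finset.sum_product]
  simp only [Finset.sum_singleton, hdeg, hdegH]
  rw [Finset.sum_add_distrib, ← Finset.sum_mul, Finset.sum_const, smul_eq_mul, hcard]
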